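/- arXiv:1902.02285 — 6 statements merged into one kernel-verified Lean document; each statement's English description precedes it below -/
import Mathlib

section
/- Let A be the 4×4 real matrix with rows (1,0,0,0), (0,0,2,0), (0,2,0,0), (0,0,0,1), let u = (0,0,1,0)ᵀ, and let θ = u*Au = 0, so that the residual is r = (A−θI)u = (0,2,0,0)ᵀ. Then A−θI = A is nonsingular, yet there exists no vector t ∈ ℝ⁴ satisfying the Jacobi–Davidson correction equation (I−uu*)(A−θI)(I−uu*)t = −r. -/
open Matrix

/-- Orthogonal projection `(I - uu*) t = t - (u ⬝ᵥ t) • u` onto the orthogonal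
complement of the unit vector `u` in `ℝ⁴`. -/
noncomputable def projR4 (u t : Fin 4 → ℝ) : Fin 4 → ℝ :=
  t - (u ⬝ᵥ t) • u

theorem stmt1 (A : Matrix (Fin 4) (Fin 4) ℝ)
    (hA : A = !![1, 0, 0, 0; 0, 0, 2, 0; 0, 2, 0, 0; 0, 0, 0, 1])
    (u : Fin 4 → ℝ) (hu : u = ![0, 0, 1, 0])
    (θ : ℝ) (hθ : θ = u ⬝ᵥ A.mulVec u)
    (r : Fin 4 → ℝ) (hr : r = (A - θ • 1).mulVec u) :
    θ = 0 ∧ r = ![0, 2, 0, 0] ∧ IsUnit (A - θ • 1) ∧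
      ¬ ∃ t : Fin 4 → ℝ,
        projR4 u ((A - θ • 1).mulVec (projR4 u t)) = -r := by
  subst hA hu
  have h0 : θ = 0 := by
    rw [hθ]; simp [mulVec, dotProduct, Fin.sum_univ_four]
  subst h0
  subst hr
  refine ⟨rfl, ?_, ?_, ?_⟩
  · ext i
    fin_cases i <;>
      simp [mulVec, dotProduct, Fin.sum_univ_four]
  · rw [Matrix.isUnit_iff_isUnit_det]
    norm_num [Matrix.det_succ_row_zero, Fin.sum_univ_succ]
    simp only [show (2 : Fin 3) = Fin.succ 1 from rfl, show (2 : Fin 4) = Fin.succ 1 from rfl, Matrix.cons_val_succ, Matrix.cons_val_one, Matrix.cons_val_zero]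
    norm_num
  · rintro ⟨t, ht⟩
    have h1 := congrFun ht 1
    simp [projR4, mulVec, dotProduct, Fin.sum_univ_four, Matrix.vecHead, Matrix.vecTail] at h1
end

section
/- Let A be an n×n complex matrix, θ ∈ ℂ, and u ∈ ℂⁿ a unit vector. Suppose t ∈ ℂⁿ satisfies the normal equation (I−uu*)(A−θI)*(A−θI)(I−uu*)t = −(I−uu*)(A−θI)*(A−θI)u and additionally (I−uu*)(A−θI)*(A−θI)(I−uu*)t = 0. Then (A−θI)(I−uu*)t = 0; consequently, either (I−uu*)t ≠ 0 and (I−uu*)t is an eigenvector of A corresponding to the eigenvalue θ, or (I−uu*)t = 0 and u is a right singular vector of A−θI, in the sense that (A−θI)*(A−θI)u = ‖(A−θI)u‖²·u. -/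
open scoped ComplexInnerProductSpace Matrix

/-- The action of a matrix on a vector of `EuclideanSpace ℂ (Fin n)`. -/
noncomputable def mApp {n : ℕ} (A : Matrix (Fin n) (Fin n) ℂ)
    (v : EuclideanSpace ℂ (Fin n)) : EuclideanSpace ℂ (Fin n) :=
  Matrix.toEuclideanLin A v

/-- The orthogonal projection `(I - uu*) t = t - ⟪u, t⟫ u` onto the orthogonal
complement of the unit vector `u`. -/
noncomputable def proj {n : ℕ} (u t : EuclideanSpace ℂ (Fin n)) :
    EuclideanSpace ℂ (Fin n) :=
  t - ⟪u, t⟫ • u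

lemma mApp_mul {n : ℕ} (M N : Matrix (Fin n) (Fin n) ℂ) (v : EuclideanSpace ℂ (Fin n)) :
    mApp (M * N) v = mApp M (mApp N v) := by
  simp [mApp, Matrix.toEuclideanLin_apply, Matrix.mulVec_mulVec]

lemma mApp_one {n : ℕ} (v : EuclideanSpace ℂ (Fin n)) : mApp (1 : Matrix (Fin n) (Fin n) ℂ) v = v := by
  simp [mApp, Matrix.toEuclideanLin_apply]

lemma mApp_sub {n : ℕ} (M N : Matrix (Fin n) (Fin n) ℂ) (v : EuclideanSpace ℂ (Fin n)) :
    mApp (M - N) v = mApp M v - mApp N v := by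
  simp [mApp]

lemma mApp_smul {n : ℕ} (c : ℂ) (M : Matrix (Fin n) (Fin n) ℂ) (v : EuclideanSpace ℂ (Fin n)) :
    mApp (c • M) v = c • mApp M v := by
  simp [mApp]

lemma inner_mApp_conjT {n : ℕ} (M : Matrix (Fin n) (Fin n) ℂ) (x y : EuclideanSpace ℂ (Fin n)) :
    ⟪x, mApp Mᴴ y⟫ = ⟪mApp M x, y⟫ := by
  rw [mApp, Matrix.toEuclideanLin_conjTranspose_eq_adjoint]
  exact LinearMap.adjoint_inner_right _ _ _

theorem stmt2 {n : ℕ} (A : Matrix (Fin n) (Fin n) ℂ) (θ : ℂ)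
    (u : EuclideanSpace ℂ (Fin n)) (hu : ‖u‖ = 1) (t : EuclideanSpace ℂ (Fin n))
    (hnormal : proj u (mApp ((A - θ • 1)ᴴ * (A - θ • 1)) (proj u t)) =
      -proj u (mApp ((A - θ • 1)ᴴ * (A - θ • 1)) u))
    (hzero : proj u (mApp ((A - θ • 1)ᴴ * (A - θ • 1)) (proj u t)) = 0) :
    mApp (A - θ • 1) (proj u t) = 0 ∧
      ((proj u t ≠ 0 ∧ mApp A (proj u t) = θ • proj u t) ∨
        (proj u t = 0 ∧
          mApp ((A - θ • 1)ᴴ * (A - θ • 1)) u = ((‖mApp (A - θ • 1) u‖ : ℂ) ^ 2) • u)) := by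
  set B := A - θ • (1 : Matrix (Fin n) (Fin n) ℂ) with hB
  set s := proj u t with hs
  have huu : ⟪u, u⟫ = 1 := by
    rw [inner_self_eq_norm_sq_to_K, hu]; norm_num
  have hus : ⟪u, s⟫ = 0 := by
    simp [hs, proj, inner_sub_right, inner_smul_right, huu, hu]
  -- from hzero : BᴴB s = ⟪u, BᴴB s⟫ • u
  have hzero' : mApp (Bᴴ * B) s = ⟪u, mApp (Bᴴ * B) s⟫ • u := by
    have := hzero
    rw [proj, sub_eq_zero] at this
    exact this
  have hBs : mApp B s = 0 := by
    have h1 : ⟪s, mApp (Bᴴ * B) s⟫ = 0 := by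
      rw [hzero', inner_smul_right]
      have : ⟪s, u⟫ = 0 := by
        rw [← inner_conj_symm, hus, map_zero]
      rw [this, mul_zero]
    rw [mApp_mul, inner_mApp_conjT] at h1
    exact inner_self_eq_zero.mp h1
  refine ⟨hBs, ?_⟩
  by_cases hsz : s = 0
  · right
    refine ⟨hsz, ?_⟩
    have hun : proj u (mApp (Bᴴ * B) u) = 0 := by
      have := hnormal
      rw [hzero] at this
      exact (neg_eq_zero.mp this.symm)
    rw [proj, sub_eq_zero] at hun
    have hc : ⟪u, mApp (Bᴴ * B) u⟫ = ((‖mApp B u‖ : ℂ)) ^ 2 := by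
      rw [mApp_mul, inner_mApp_conjT, inner_self_eq_norm_sq_to_K]
      norm_cast
    rw [hun, hc]
  · left
    refine ⟨hsz, ?_⟩
    have := hBs
    rw [hB, mApp_sub, mApp_smul, mApp_one, sub_eq_zero] at this
    exact this
end

section
/- Let A be an n×n Hermitian complex matrix. Let (u_k) be a sequence of unit vectors in ℂⁿ with real Rayleigh quotients ρ_k = ⟨u_k, A u_k⟩, and let (v_k) be a sequence of vectors such that for every k: (i) ⟨u_k, v_k⟩ = 0; (ii) ‖(A−ρ_k I)(u_k + v_k)‖ ≤ ‖(A−ρ_k I)(u_k + w)‖ for every w ∈ ℂⁿ with ⟨u_k, w⟩ = 0; and (iii) u_{k+1} = (u_k + v_k)/‖u_k + v_k‖. Then the sequence of residual norms (‖(A−ρ_k I)u_k‖²) is monotonically nonincreasing, the sequences (‖(A−ρ_k I)u_k‖²) and (‖(A−ρ_k I)u_{k+1}‖²) converge to the same limit, and |ρ_{k+1} − ρ_k| → 0 as k → ∞. -/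
open scoped ComplexInnerProductSpace Matrix

lemma mApp_sub_smul_one {n : ℕ} (A : Matrix (Fin n) (Fin n) ℂ) (c : ℂ)
    (x : EuclideanSpace ℂ (Fin n)) :
    mApp (A - c • 1) x = mApp A x - c • x := by
  simp [mApp, map_sub, map_smul, Matrix.toEuclideanLin_apply, Matrix.sub_mulVec,
    Matrix.smul_mulVec, Matrix.one_mulVec]

lemma mApp_smul_real {n : ℕ} (A : Matrix (Fin n) (Fin n) ℂ) (c : ℝ)
    (x : EuclideanSpace ℂ (Fin n)) :
    mApp A (c • x) = c • mApp A x := by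
  simp [mApp, LinearMap.map_smul_of_tower]

lemma mApp_orth {n : ℕ} (A : Matrix (Fin n) (Fin n) ℂ) (x : EuclideanSpace ℂ (Fin n))
    (hx : ‖x‖ = 1) (ρ : ℝ) (h : (ρ : ℂ) = ⟪x, mApp A x⟫) :
    ⟪x, mApp (A - (ρ : ℂ) • 1) x⟫ = 0 := by
  rw [mApp_sub_smul_one, inner_sub_right, inner_smul_right, ← h,
    @inner_self_eq_norm_sq_to_K ℂ, hx]
  simp

/-- Key identity: for a unit vector with real Rayleigh quotient ρ, shifting by σ adds (σ-ρ)². -/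
lemma key {n : ℕ} (A : Matrix (Fin n) (Fin n) ℂ) (x : EuclideanSpace ℂ (Fin n))
    (hx : ‖x‖ = 1) (ρ σ : ℝ) (h : (ρ : ℂ) = ⟪x, mApp A x⟫) :
    ‖mApp (A - (σ : ℂ) • 1) x‖ ^ 2 = ‖mApp (A - (ρ : ℂ) • 1) x‖ ^ 2 + (σ - ρ) ^ 2 := by
  have hdecomp : mApp (A - (σ : ℂ) • 1) x
      = mApp (A - (ρ : ℂ) • 1) x + ((ρ : ℂ) - (σ : ℂ)) • x := by
    rw [mApp_sub_smul_one, mApp_sub_smul_one, sub_smul]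
    abel
  have hperp : ⟪mApp (A - (ρ : ℂ) • 1) x, ((ρ : ℂ) - (σ : ℂ)) • x⟫ = 0 := by
    rw [inner_smul_right, ← inner_conj_symm, mApp_orth A x hx ρ h]
    simp
  have h2 := norm_add_sq_eq_norm_sq_add_norm_sq_of_inner_eq_zero _ _ hperp
  have hb : ‖((ρ : ℂ) - (σ : ℂ)) • x‖ = |ρ - σ| := by
    rw [norm_smul, hx, mul_one, ← Complex.ofReal_sub, Complex.norm_real, Real.norm_eq_abs]
  rw [hdecomp, pow_two, h2, hb, ← pow_two, ← pow_two, sq_abs]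
  ring

theorem stmt5 {n : ℕ} (A : Matrix (Fin n) (Fin n) ℂ) (hA : A.IsHermitian)
    (u v : ℕ → EuclideanSpace ℂ (Fin n)) (ρ : ℕ → ℝ)
    (hu : ∀ k, ‖u k‖ = 1)
    (hρ : ∀ k, ((ρ k : ℂ)) = ⟪u k, mApp A (u k)⟫)
    (horth : ∀ k, ⟪u k, v k⟫ = 0)
    (hmin : ∀ k, ∀ w : EuclideanSpace ℂ (Fin n), ⟪u k, w⟫ = (0 : ℂ) →
      ‖mApp (A - (ρ k : ℂ) • 1) (u k + v k)‖ ≤ ‖mApp (A - (ρ k : ℂ) • 1) (u k + w)‖)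
    (hnext : ∀ k, u (k + 1) = ‖u k + v k‖⁻¹ • (u k + v k)) :
    Antitone (fun k => ‖mApp (A - (ρ k : ℂ) • 1) (u k)‖ ^ 2) ∧
    (∃ L : ℝ,
      Filter.Tendsto (fun k => ‖mApp (A - (ρ k : ℂ) • 1) (u k)‖ ^ 2)
        Filter.atTop (nhds L) ∧
      Filter.Tendsto (fun k => ‖mApp (A - (ρ k : ℂ) • 1) (u (k + 1))‖ ^ 2)
        Filter.atTop (nhds L)) ∧
    Filter.Tendsto (fun k => |ρ (k + 1) - ρ k|) Filter.atTop (nhds 0) := by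
  set r : ℕ → ℝ := fun k => ‖mApp (A - (ρ k : ℂ) • 1) (u k)‖ ^ 2 with hr
  set s : ℕ → ℝ := fun k => ‖mApp (A - (ρ k : ℂ) • 1) (u (k + 1))‖ ^ 2 with hs
  -- norm of u k + v k is at least 1
  have hnorm_ge : ∀ k, (1 : ℝ) ≤ ‖u k + v k‖ := by
    intro k
    have h2 := norm_add_sq_eq_norm_sq_add_norm_sq_of_inner_eq_zero _ _ (horth k)
    nlinarith [norm_nonneg (u k + v k), norm_nonneg (v k), hu k]
  -- s k ≤ r k
  have hsr : ∀ k, s k ≤ r k := by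
    intro k
    have h1 : ‖mApp (A - (ρ k : ℂ) • 1) (u (k + 1))‖
        ≤ ‖mApp (A - (ρ k : ℂ) • 1) (u k + v k)‖ := by
      have h0 : (0 : ℝ) < ‖u k + v k‖ := lt_of_lt_of_le one_pos (hnorm_ge k)
      rw [hnext k, mApp_smul_real, norm_smul, Real.norm_eq_abs,
        abs_of_pos (inv_pos.2 h0)]
      calc ‖u k + v k‖⁻¹ * ‖mApp (A - (ρ k : ℂ) • 1) (u k + v k)‖
          ≤ 1 * ‖mApp (A - (ρ k : ℂ) • 1) (u k + v k)‖ :=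
            mul_le_mul_of_nonneg_right (inv_le_one_of_one_le₀ (hnorm_ge k)) (norm_nonneg _)
        _ = _ := one_mul _
    have h2 : ‖mApp (A - (ρ k : ℂ) • 1) (u k + v k)‖
        ≤ ‖mApp (A - (ρ k : ℂ) • 1) (u k)‖ := by
      have := hmin k 0 (by simp)
      simpa using this
    have := le_trans h1 h2
    exact pow_le_pow_left₀ (norm_nonneg _) this 2
  -- r (k+1) + (ρ k - ρ (k+1))^2 = s k
  have hkey : ∀ k, s k = r (k + 1) + (ρ k - ρ (k + 1)) ^ 2 := by
    intro k
    exact key A (u (k + 1)) (hu (k + 1)) (ρ (k + 1)) (ρ k) (hρ (k + 1))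
  have hrs : ∀ k, r (k + 1) ≤ s k := by
    intro k; rw [hkey k]; nlinarith [sq_nonneg (ρ k - ρ (k + 1))]
  have hanti : Antitone r :=
    antitone_nat_of_succ_le fun k => le_trans (hrs k) (hsr k)
  -- r converges
  have hbdd : BddBelow (Set.range r) := by
    refine ⟨0, ?_⟩
    rintro x ⟨k, rfl⟩
    positivity
  have hrL : Filter.Tendsto r Filter.atTop (nhds (⨅ k, r k)) :=
    tendsto_atTop_ciInf hanti hbdd
  set L := ⨅ k, r k with hL
  have hrL' : Filter.Tendsto (fun k => r (k + 1)) Filter.atTop (nhds L) :=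
    hrL.comp (Filter.tendsto_add_atTop_nat 1)
  have hsL : Filter.Tendsto s Filter.atTop (nhds L) :=
    tendsto_of_tendsto_of_tendsto_of_le_of_le hrL' hrL hrs hsr
  refine ⟨hanti, ⟨L, hrL, hsL⟩, ?_⟩
  -- |ρ (k+1) - ρ k| = sqrt (s k - r (k+1)) → 0
  have hdiff : Filter.Tendsto (fun k => s k - r (k + 1)) Filter.atTop (nhds 0) := by
    have := hsL.sub hrL'
    simpa using this
  have habs : ∀ k, |ρ (k + 1) - ρ k| = Real.sqrt (s k - r (k + 1)) := by
    intro k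
    rw [hkey k]
    have : r (k + 1) + (ρ k - ρ (k + 1)) ^ 2 - r (k + 1) = (ρ (k + 1) - ρ k) ^ 2 := by ring
    rw [this, Real.sqrt_sq_eq_abs]
  have : Filter.Tendsto (fun k => Real.sqrt (s k - r (k + 1))) Filter.atTop (nhds 0) := by
    have := hdiff.sqrt
    simpa using this
  exact this.congr fun k => (habs k).symm
end

section
/- Let A be an n×n Hermitian complex matrix. Let (u_k) be a sequence of unit vectors in ℂⁿ with real Rayleigh quotients ρ_k = ⟨u_k, A u_k⟩, and (v_k) a sequence of vectors such that for every k: (i) ⟨u_k, v_k⟩ = 0; (ii) ‖(A−ρ_k I)(u_k + v_k)‖ ≤ ‖(A−ρ_k I)(u_k + w)‖ for every w with ⟨u_k, w⟩ = 0; (iii) u_{k+1} = (u_k + v_k)/‖u_k + v_k‖; and (iv) whenever v_k ≠ 0, there exists a scalar τ_k such that u_k + τ_k·v_k minimizes ‖(A−ρ_k I)z‖²/‖z‖² over all nonzero z in the span of {u_k, v_k}. Then ‖(A−ρ_k I)u_k‖²·‖v_k‖² → 0 as k → ∞. -/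
open scoped ComplexInnerProductSpace Matrix

/-- If `X` has minimal norm among `X + t • Y`, then `⟪X, Y⟫ = 0`. -/
lemma aux_inner_zero {E : Type*} [NormedAddCommGroup E] [InnerProductSpace ℂ E]
    (X Y : E) (h : ∀ t : ℂ, ‖X‖ ≤ ‖X + t • Y‖) : ⟪X, Y⟫ = 0 := by
  by_cases hY : Y = 0
  · simp [hY]
  · have hY2 : (0:ℝ) < ‖Y‖^2 := by
      have : 0 < ‖Y‖ := norm_pos_iff.mpr hY
      positivity
    have hYC : ((‖Y‖^2 : ℝ) : ℂ) ≠ 0 := by exact_mod_cast hY2.ne'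
    set I : ℂ := @inner ℂ E _ X Y with hI
    set t : ℂ := -(starRingEnd ℂ) I / ((‖Y‖^2 : ℝ) : ℂ) with ht
    have hsq : ‖X + t • Y‖^2 = ‖X‖^2 - ‖I‖^2/‖Y‖^2 := by
      rw [norm_add_sq (𝕜 := ℂ)]
      have h1 : ⟪X, t • Y⟫ = t * I := by rw [inner_smul_right]
      have hconj : (starRingEnd ℂ) I * I = ((‖I‖^2 : ℝ) : ℂ) := by
        rw [RCLike.conj_mul]; norm_cast
      have h2 : t * I = ((-‖I‖^2/‖Y‖^2 : ℝ) : ℂ) := by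
        rw [ht, div_mul_eq_mul_div, neg_mul, hconj]
        push_cast
        ring
      have h3 : RCLike.re ⟪X, t • Y⟫ = -‖I‖^2/‖Y‖^2 := by
        rw [h1, h2]
        exact Complex.ofReal_re _
      have h4 : ‖t • Y‖^2 = ‖I‖^2/‖Y‖^2 := by
        rw [norm_smul, mul_pow, ht]
        have h5 : ‖-(starRingEnd ℂ) I / ((‖Y‖^2 : ℝ) : ℂ)‖ = ‖I‖/‖Y‖^2 := by
          rw [norm_div, norm_neg, RCLike.norm_conj]
          simp
        rw [h5]
        field_simp
      rw [h3, h4]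
      ring
    have h5 := h t
    have h6 : ‖X‖^2 ≤ ‖X + t • Y‖^2 := by
      apply pow_le_pow_left₀ (norm_nonneg _) h5
    rw [hsq] at h6
    have h7 : ‖I‖^2/‖Y‖^2 ≤ 0 := by linarith
    have h8 : ‖I‖^2 ≤ 0 := by
      by_contra hc
      push_neg at hc
      have : 0 < ‖I‖^2/‖Y‖^2 := div_pos hc hY2
      linarith
    show I = 0
    have h9 : ‖I‖ = 0 := by nlinarith [norm_nonneg I]
    exact norm_eq_zero.mp h9


set_option maxHeartbeats 1000000 in
/-- Key quantitative estimate in spectral coordinates. -/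
lemma aux_key {n : ℕ} (s W : Fin n → ℝ) (x y : Fin n → ℂ) (κ aa dd γ : ℝ)
    (hW : ∀ i, W i = Complex.normSq (x i))
    (F1 : ∑ i, W i = 1)
    (F2 : ∑ i, s i ^ 2 * W i = aa)
    (F3 : ∀ i, ((s i : ℝ) : ℂ) * (((s i : ℝ) : ℂ) * y i) = ((κ : ℝ) : ℂ) * x i)
    (F4 : ∑ i, (starRingEnd ℂ) (x i) * y i = 1)
    (F5 : ∑ i, Complex.normSq (y i) = 1 + dd)
    (hκpos : 0 < κ) (hκa : κ ≤ aa)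
    (hγpos : 0 < γ)
    (hgap : ∀ i j, s i ≠ s j → γ ≤ |s i - s j|)
    (haδ : aa ≤ γ ^ 2 / 8) :
    dd ≤ 12 / γ ^ 2 * aa := by
  classical
  have hW0 : ∀ i, 0 ≤ W i := fun i => (hW i) ▸ Complex.normSq_nonneg _
  have haa0 : 0 < aa := lt_of_lt_of_le hκpos hκa
  -- find i₀ with s i₀ ^ 2 ≤ aa
  have hex : ∃ i, s i ^ 2 ≤ aa := by
    by_contra hc
    push_neg at hc
    have hj : ∃ j, W j ≠ 0 := by
      by_contra hc2
      push_neg at hc2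
      rw [Finset.sum_congr rfl (fun i _ => hc2 i)] at F1
      simp at F1
    obtain ⟨j, hj⟩ := hj
    have hjpos : 0 < W j := lt_of_le_of_ne (hW0 j) (Ne.symm hj)
    have hlt : ∑ i, aa * W i < ∑ i, s i ^ 2 * W i := by
      apply Finset.sum_lt_sum
      · intro i _
        exact mul_le_mul_of_nonneg_right (hc i).le (hW0 i)
      · exact ⟨j, Finset.mem_univ j, mul_lt_mul_of_pos_right (hc j) hjpos⟩
    rw [F2, ← Finset.mul_sum, F1, mul_one] at hlt
    exact lt_irrefl _ hlt
  obtain ⟨i₀, hi₀⟩ := hex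
  set S : Finset (Fin n) := Finset.univ.filter (fun i => s i = s i₀) with hSdef
  have hi₀S : i₀ ∈ S := Finset.mem_filter.mpr ⟨Finset.mem_univ _, rfl⟩
  have hsS : ∀ i ∈ S, s i = s i₀ := fun i hi => (Finset.mem_filter.mp hi).2
  -- |s i₀| ≤ γ/2
  have habs : |s i₀| ≤ γ / 2 := by
    have h1 : s i₀ ^ 2 ≤ (γ / 2) ^ 2 := by nlinarith
    have h2 := abs_le_of_sq_le_sq' h1 (by positivity)
    exact abs_le.mpr ⟨h2.1, h2.2⟩
  -- gap for i ∉ S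
  have hgap2 : ∀ i, i ∉ S → (γ / 2) ^ 2 ≤ s i ^ 2 := by
    intro i hiS
    have hne : s i ≠ s i₀ := by
      intro hc
      exact hiS (Finset.mem_filter.mpr ⟨Finset.mem_univ _, hc⟩)
    have h1 := hgap i i₀ hne
    have h2 : |s i - s i₀| ≤ |s i| + |s i₀| := abs_sub _ _
    have h3 : γ / 2 ≤ |s i| := by linarith
    calc (γ / 2) ^ 2 ≤ |s i| ^ 2 := by nlinarith
    _ = s i ^ 2 := sq_abs _
  -- βsq
  set βsq : ℝ := ∑ i ∈ S, W i with hβdef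
  have hsplitW := Finset.sum_filter_add_sum_filter_not Finset.univ (fun i => s i = s i₀) W
  have hWcomp : ∑ i ∈ Finset.univ.filter (fun i => ¬ s i = s i₀), W i ≤ 4 / γ ^ 2 * aa := by
    have h1 : (γ / 2) ^ 2 * ∑ i ∈ Finset.univ.filter (fun i => ¬ s i = s i₀), W i
        ≤ ∑ i ∈ Finset.univ.filter (fun i => ¬ s i = s i₀), s i ^ 2 * W i := by
      rw [Finset.mul_sum]
      apply Finset.sum_le_sum
      intro i hi
      have hiS : i ∉ S := by
        simp only [hSdef, Finset.mem_filter, Finset.mem_univ, true_and]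
        exact (Finset.mem_filter.mp hi).2
      exact mul_le_mul_of_nonneg_right (hgap2 i hiS) (hW0 i)
    have h2 : ∑ i ∈ Finset.univ.filter (fun i => ¬ s i = s i₀), s i ^ 2 * W i ≤ aa := by
      rw [← F2]
      apply Finset.sum_le_sum_of_subset_of_nonneg (Finset.filter_subset _ _)
      intro i _ _
      exact mul_nonneg (sq_nonneg _) (hW0 i)
    have h3 : (0:ℝ) < (γ / 2) ^ 2 := by positivity
    have h4 := le_trans h1 h2
    have h5 : ∑ i ∈ Finset.univ.filter (fun i => ¬ s i = s i₀), W i ≤ aa / ((γ/2)^2) := by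
      rw [le_div_iff₀ h3]
      linarith
    have h6 : aa / ((γ/2)^2) = 4 / γ ^ 2 * aa := by
      field_simp
      ring
    linarith
  have hβlow : 1 - 4 / γ ^ 2 * aa ≤ βsq := by
    have : βsq + ∑ i ∈ Finset.univ.filter (fun i => ¬ s i = s i₀), W i = 1 := by
      rw [hβdef, hSdef, hsplitW, F1]
    linarith
  have hβhalf : 1 / 2 ≤ βsq := by
    have h4 : 4 / γ ^ 2 * aa ≤ 1 / 2 := by
      rw [div_mul_eq_mul_div, div_le_div_iff₀ (by positivity) (by norm_num)]
      nlinarith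
    linarith
  have hβpos : 0 < βsq := by linarith
  -- s i₀ ≠ 0
  have hσpos : 0 < s i₀ ^ 2 := by
    rcases lt_or_eq_of_le (sq_nonneg (s i₀)) with h | h
    · exact h
    · exfalso
      have hs0 : s i₀ = 0 := by nlinarith
      have hx0 : ∀ i ∈ S, W i = 0 := by
        intro i hi
        have h5 := F3 i
        rw [hsS i hi, hs0] at h5
        simp only [Complex.ofReal_zero, zero_mul] at h5
        have hκne : ((κ:ℝ):ℂ) ≠ 0 := by exact_mod_cast hκpos.ne'
        have hx : x i = 0 := by
          rcases mul_eq_zero.mp h5.symm with h | h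
          · exact absurd h hκne
          · exact h
        rw [hW i, hx]
        simp
      have : βsq = 0 := by
        rw [hβdef]
        exact Finset.sum_eq_zero hx0
      linarith
  have hspos : ∀ i, 0 < s i ^ 2 := by
    intro i
    by_cases hiS : i ∈ S
    · rw [hsS i hiS]; exact hσpos
    · have := hgap2 i hiS
      have : (0:ℝ) < (γ/2)^2 := by positivity
      nlinarith [hgap2 i hiS]
  -- y in terms of x
  have hy : ∀ i, y i = ((κ / s i ^ 2 : ℝ) : ℂ) * x i := by
    intro i
    have hs2 : ((s i ^ 2 : ℝ) : ℂ) ≠ 0 := by exact_mod_cast (hspos i).ne'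
    apply mul_left_cancel₀ hs2
    calc ((s i ^ 2 : ℝ) : ℂ) * y i = ((s i : ℝ) : ℂ) * (((s i : ℝ) : ℂ) * y i) := by
          push_cast; ring
    _ = ((κ : ℝ) : ℂ) * x i := F3 i
    _ = ((s i ^ 2 : ℝ) : ℂ) * (((κ / s i ^ 2 : ℝ) : ℂ) * x i) := by
          have hsne : s i ≠ 0 := by
            intro hc
            exact (hspos i).ne' (by rw [hc]; ring)
          have hsneC : ((s i : ℝ) : ℂ) ≠ 0 := by exact_mod_cast hsne
          push_cast
          field_simp
  -- t i sums to 1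
  set t : Fin n → ℝ := fun i => κ * W i / s i ^ 2 with htdef
  have ht0 : ∀ i, 0 ≤ t i := by
    intro i
    exact div_nonneg (mul_nonneg hκpos.le (hW0 i)) (sq_nonneg _)
  have htsum : ∑ i, t i = 1 := by
    have hC : ∑ i, ((t i : ℝ) : ℂ) = 1 := by
      rw [← F4]
      refine Finset.sum_congr rfl fun i _ => ?_
      calc ((t i : ℝ) : ℂ) = ((κ / s i ^ 2 : ℝ) : ℂ) * ((W i : ℝ) : ℂ) := by
            simp only [htdef]; push_cast; ring
      _ = ((κ / s i ^ 2 : ℝ) : ℂ) * ((starRingEnd ℂ) (x i) * x i) := by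
            rw [hW i, Complex.normSq_eq_conj_mul_self]
      _ = (starRingEnd ℂ) (x i) * y i := by rw [hy i]; ring
    exact_mod_cast hC
  have ht1 : ∀ i, t i ≤ 1 := by
    intro i
    rw [← htsum]
    exact Finset.single_le_sum (fun j _ => ht0 j) (Finset.mem_univ i)
  -- F5 rewritten
  have hF5' : ∑ i, (κ / s i ^ 2) ^ 2 * W i = 1 + dd := by
    rw [← F5]
    refine Finset.sum_congr rfl fun i _ => ?_
    rw [hy i, Complex.normSq_mul, hW i]
    rw [Complex.normSq_ofReal]
    ring
  -- split F5
  have hsplit5 := Finset.sum_filter_add_sum_filter_not Finset.univ (fun i => s i = s i₀)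
    (fun i => (κ / s i ^ 2) ^ 2 * W i)
  -- sum over S
  have hSsum : ∑ i ∈ S, (κ / s i ^ 2) ^ 2 * W i = (κ / s i₀ ^ 2) ^ 2 * βsq := by
    rw [hβdef, Finset.mul_sum]
    exact Finset.sum_congr rfl fun i hi => by rw [hsS i hi]
  have hTSsum : ∑ i ∈ S, t i = (κ / s i₀ ^ 2) * βsq := by
    rw [hβdef, Finset.mul_sum]
    exact Finset.sum_congr rfl fun i hi => by simp only [htdef]; rw [hsS i hi]; ring
  have hTSle : ∑ i ∈ S, t i ≤ 1 := by
    rw [← htsum]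
    exact Finset.sum_le_sum_of_subset_of_nonneg (Finset.filter_subset _ _)
      (fun i _ _ => ht0 i)
  have hTS0 : 0 ≤ ∑ i ∈ S, t i := Finset.sum_nonneg fun i _ => ht0 i
  -- sum over complement
  have hCompsum : ∑ i ∈ Finset.univ.filter (fun i => ¬ s i = s i₀),
      (κ / s i ^ 2) ^ 2 * W i ≤ 4 / γ ^ 2 * aa := by
    have h1 : ∀ i ∈ Finset.univ.filter (fun i => ¬ s i = s i₀),
        (κ / s i ^ 2) ^ 2 * W i ≤ (4 / γ ^ 2 * aa) * t i := by
      intro i hi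
      have hiS : i ∉ S := by
        simp only [hSdef, Finset.mem_filter, Finset.mem_univ, true_and]
        exact (Finset.mem_filter.mp hi).2
      have hg := hgap2 i hiS
      have hsp := hspos i
      have hdivle : κ / s i ^ 2 ≤ 4 / γ ^ 2 * aa := by
        rw [div_le_iff₀ hsp]
        have h2 : (γ/2)^2 * (4 / γ ^ 2 * aa) = aa := by
          field_simp
          ring
        calc κ ≤ aa := hκa
        _ = (γ/2)^2 * (4 / γ ^ 2 * aa) := h2.symm
        _ ≤ (4 / γ ^ 2 * aa) * s i ^ 2 := by nlinarith [haa0]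
      calc (κ / s i ^ 2) ^ 2 * W i = (κ / s i ^ 2) * t i := by
            simp only [htdef]
            ring
      _ ≤ (4 / γ ^ 2 * aa) * t i := mul_le_mul_of_nonneg_right hdivle (ht0 i)
    calc ∑ i ∈ Finset.univ.filter (fun i => ¬ s i = s i₀), (κ / s i ^ 2) ^ 2 * W i
        ≤ ∑ i ∈ Finset.univ.filter (fun i => ¬ s i = s i₀), (4 / γ ^ 2 * aa) * t i :=
          Finset.sum_le_sum h1
    _ = (4 / γ ^ 2 * aa) * ∑ i ∈ Finset.univ.filter (fun i => ¬ s i = s i₀), t i := by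
          rw [Finset.mul_sum]
    _ ≤ (4 / γ ^ 2 * aa) * 1 := by
          apply mul_le_mul_of_nonneg_left _ (by positivity)
          rw [← htsum]
          exact Finset.sum_le_sum_of_subset_of_nonneg (Finset.filter_subset _ _)
            (fun i _ _ => ht0 i)
    _ = 4 / γ ^ 2 * aa := mul_one _
  -- final arithmetic
  set c : ℝ := 4 / γ ^ 2 * aa with hcdef
  have hc0 : 0 ≤ c := by positivity
  have hchalf : c ≤ 1 / 2 := by
    rw [hcdef, div_mul_eq_mul_div, div_le_div_iff₀ (by positivity) (by norm_num)]
    nlinarith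
  set TS : ℝ := ∑ i ∈ S, t i with hTSdef
  set SS2 : ℝ := ∑ i ∈ S, (κ / s i ^ 2) ^ 2 * W i with hSS2def
  have hSS20 : 0 ≤ SS2 := Finset.sum_nonneg fun i _ =>
    mul_nonneg (sq_nonneg _) (hW0 i)
  have hrel : SS2 * βsq = TS ^ 2 := by
    rw [hSsum, hTSsum]
    ring
  have heq : SS2 + ∑ i ∈ Finset.univ.filter (fun i => ¬ s i = s i₀),
      (κ / s i ^ 2) ^ 2 * W i = 1 + dd := by
    rw [hsplit5, hF5']
  -- SS2 ≤ 1 + 2c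
  have hSS2le : SS2 ≤ 1 + 2 * c := by
    nlinarith [hrel, hTSle, hTS0, hβlow, hβhalf, hSS20, hc0, hchalf]
  have h30 : dd ≤ 3 * c := by linarith [hCompsum]
  rw [hcdef] at h30
  have h31 : 3 * (4 / γ ^ 2 * aa) = 12 / γ ^ 2 * aa := by ring
  linarith

set_option maxHeartbeats 2000000 in
theorem stmt11 {n : ℕ} (A : Matrix (Fin n) (Fin n) ℂ) (hA : A.IsHermitian)
    (u v : ℕ → EuclideanSpace ℂ (Fin n)) (ρ : ℕ → ℝ)
    (hu : ∀ k, ‖u k‖ = 1)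
    (hρ : ∀ k, ((ρ k : ℂ)) = ⟪u k, mApp A (u k)⟫)
    (horth : ∀ k, ⟪u k, v k⟫ = (0 : ℂ))
    (hmin : ∀ k, ∀ w : EuclideanSpace ℂ (Fin n), ⟪u k, w⟫ = (0 : ℂ) →
      ‖mApp (A - (ρ k : ℂ) • 1) (u k + v k)‖ ≤ ‖mApp (A - (ρ k : ℂ) • 1) (u k + w)‖)
    (hnext : ∀ k, u (k + 1) = ‖u k + v k‖⁻¹ • (u k + v k))
    (hmin2 : ∀ k, v k ≠ 0 → ∃ τ : ℂ,
      ∀ z ∈ Submodule.span ℂ ({u k, v k} : Set (EuclideanSpace ℂ (Fin n))), z ≠ 0 →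
        ‖mApp (A - (ρ k : ℂ) • 1) (u k + τ • v k)‖ ^ 2 / ‖u k + τ • v k‖ ^ 2 ≤
          ‖mApp (A - (ρ k : ℂ) • 1) z‖ ^ 2 / ‖z‖ ^ 2) :
    Filter.Tendsto (fun k => ‖mApp (A - (ρ k : ℂ) • 1) (u k)‖ ^ 2 * ‖v k‖ ^ 2)
      Filter.atTop (nhds 0) := by
  classical
  clear hmin2
  -- dispose of the trivial case n = 0
  rcases Nat.eq_zero_or_pos n with hn | hn
  · exfalso
    have h1 := hu 0
    subst hn
    have h2 : u 0 = 0 := by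
      ext i
      exact absurd i.isLt (Nat.not_lt_zero _)
    rw [h2, norm_zero] at h1
    exact one_ne_zero h1.symm
  have : Nonempty (Fin n) := ⟨⟨0, hn⟩⟩
  -- the symmetric operator T
  set T : EuclideanSpace ℂ (Fin n) →ₗ[ℂ] EuclideanSpace ℂ (Fin n) := Matrix.toEuclideanLin A
    with hTdef
  have hsym : ∀ x y, ⟪T x, y⟫ = ⟪x, T y⟫ := Matrix.isHermitian_iff_isSymmetric.mp hA
  set M : ℕ → EuclideanSpace ℂ (Fin n) →ₗ[ℂ] EuclideanSpace ℂ (Fin n) :=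
    fun k => T - (ρ k : ℂ) • LinearMap.id with hMdef
  have hMapp : ∀ k x, M k x = T x - (ρ k : ℂ) • x := by
    intro k x; simp [hMdef]
  have hmApp : ∀ (k : ℕ) (x : EuclideanSpace ℂ (Fin n)),
      mApp (A - (ρ k : ℂ) • 1) x = M k x := by
    intro k x
    rw [hMapp]
    have e1 : Matrix.toEuclideanLin (A - (ρ k : ℂ) • 1) x
        = Matrix.toEuclideanLin A x - (ρ k : ℂ) • Matrix.toEuclideanLin 1 x := by
      rw [map_sub, map_smul, LinearMap.sub_apply, LinearMap.smul_apply]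
    have e2 : Matrix.toEuclideanLin (1 : Matrix (Fin n) (Fin n) ℂ) x = x := by
      rw [Matrix.toEuclideanLin_apply, Matrix.one_mulVec]
    show Matrix.toEuclideanLin (A - (ρ k : ℂ) • 1) x = _
    rw [e1, e2]
  have hMsym : ∀ k x y, ⟪M k x, y⟫ = ⟪x, M k y⟫ := by
    intro k x y
    rw [hMapp, hMapp, inner_sub_left, inner_sub_right, hsym, inner_smul_left, inner_smul_right,
      Complex.conj_ofReal]
  -- basic sequences
  set p : ℕ → EuclideanSpace ℂ (Fin n) := fun k => u k + v k with hpdef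
  set a : ℕ → ℝ := fun k => ‖M k (u k)‖^2 with hadef
  set d : ℕ → ℝ := fun k => ‖v k‖^2 with hddef
  set g : ℕ → EuclideanSpace ℂ (Fin n) := fun k => M k (p k) with hgdef
  set κ : ℕ → ℝ := fun k => ‖g k‖^2 with hκdef
  have ha0 : ∀ k, 0 ≤ a k := fun k => sq_nonneg _
  have hd0 : ∀ k, 0 ≤ d k := fun k => sq_nonneg _
  have hκ0 : ∀ k, 0 ≤ κ k := fun k => sq_nonneg _
  have hmin' : ∀ k w, ⟪u k, w⟫ = (0:ℂ) → ‖g k‖ ≤ ‖M k (u k + w)‖ := by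
    intro k w hw
    have := hmin k w hw
    rwa [hmApp, hmApp] at this
  have huu : ∀ k, ⟪u k, u k⟫ = (1:ℂ) := by
    intro k; rw [inner_self_eq_norm_sq_to_K, hu]; norm_num
  have hup : ∀ k, ⟪u k, p k⟫ = (1:ℂ) := by
    intro k
    simp only [hpdef, inner_add_right, huu k, horth k, add_zero]
  have hpu : ∀ k, ⟪p k, u k⟫ = (1:ℂ) := by
    intro k; rw [← inner_conj_symm, hup]; simp
  have hp2 : ∀ k, ‖p k‖^2 = 1 + d k := by
    intro k
    show ‖u k + v k‖^2 = 1 + d k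
    rw [norm_add_sq (𝕜 := ℂ), horth, hu]
    simp [hddef]
  have hp2pos : ∀ k, (0:ℝ) < ‖p k‖^2 := by
    intro k; rw [hp2]; have := hd0 k; linarith
  have hpnorm : ∀ k, ‖p k‖ ≠ 0 := by
    intro k hc
    have := hp2pos k
    rw [hc] at this; norm_num at this
  -- normal equation
  have hNE : ∀ k w, ⟪u k, w⟫ = (0:ℂ) → ⟪g k, M k w⟫ = 0 := by
    intro k w hw
    apply aux_inner_zero
    intro t
    have hw' : ⟪u k, v k + t • w⟫ = (0:ℂ) := by
      rw [inner_add_right, inner_smul_right, horth, hw]; ring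
    have h1 := hmin' k (v k + t • w) hw'
    have h2 : u k + (v k + t • w) = p k + t • w := by
      show u k + (v k + t • w) = (u k + v k) + t • w; abel
    rw [h2] at h1
    have h3 : M k (p k + t • w) = g k + t • M k w := by
      rw [map_add, map_smul, hgdef]
    rwa [h3] at h1
  -- B p = κ u
  have hBp : ∀ k, M k (g k) = ((κ k : ℝ) : ℂ) • u k := by
    intro k
    have key : ∀ w, ⟪u k, w⟫ = (0:ℂ) → ⟪w, M k (g k)⟫ = 0 := by
      intro w hw
      rw [← hMsym k w (g k), ← inner_conj_symm, hNE k w hw, map_zero]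
    set c : ℂ := ⟪u k, M k (g k)⟫ with hcdef
    have h1 : ⟪u k, M k (g k) - c • u k⟫ = 0 := by
      rw [inner_sub_right, inner_smul_right, huu k, mul_one, hcdef, sub_self]
    have h2 := key _ h1
    have h4 : ⟪M k (g k) - c • u k, u k⟫ = 0 := by
      rw [← inner_conj_symm, h1, map_zero]
    have h3 : ⟪M k (g k) - c • u k, M k (g k) - c • u k⟫ = (0:ℂ) := by
      rw [inner_sub_right, h2, inner_smul_right, h4, mul_zero, sub_zero]
    have h5 : M k (g k) = c • u k := by
      have := inner_self_eq_zero.mp h3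
      rwa [sub_eq_zero] at this
    have h6 : c = ((κ k : ℝ) : ℂ) := by
      have h7 : (⟪g k, g k⟫ : ℂ) = c := by
        calc (⟪g k, g k⟫ : ℂ) = ⟪M k (p k), g k⟫ := rfl
        _ = ⟪p k, M k (g k)⟫ := hMsym k (p k) (g k)
        _ = ⟪p k, c • u k⟫ := by rw [h5]
        _ = c * ⟪p k, u k⟫ := inner_smul_right _ _ _
        _ = c := by rw [hpu k, mul_one]
      rw [← h7, inner_self_eq_norm_sq_to_K]
      norm_cast
    rw [← h6]; exact h5
  -- κ ≤ a
  have hκa : ∀ k, κ k ≤ a k := by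
    intro k
    have h1 : ⟪u k, (0 : EuclideanSpace ℂ (Fin n))⟫ = (0:ℂ) := inner_zero_right _
    have h2 := hmin' k 0 h1
    rw [add_zero] at h2
    exact pow_le_pow_left₀ (norm_nonneg _) h2 2
  -- main step inequality
  have hstep : ∀ k, a (k+1) * ‖p k‖^2 ≤ κ k := by
    intro k
    have hu1 : u (k+1) = (‖p k‖⁻¹ : ℝ) • p k := hnext k
    have hsmul : (‖p k‖⁻¹ : ℝ) • p k = ((‖p k‖⁻¹ : ℝ) : ℂ) • p k :=
      RCLike.real_smul_eq_coe_smul (K := ℂ) _ _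
    -- ⟪p, M (k+1) p⟫ = 0
    have hinner0 : ⟪p k, M (k+1) (p k)⟫ = 0 := by
      have h6 : (ρ (k+1) : ℂ) = ⟪u (k+1), T (u (k+1))⟫ := hρ (k+1)
      rw [hu1, hsmul, map_smul, inner_smul_left, inner_smul_right, Complex.conj_ofReal] at h6
      set ip : ℂ := (inner ℂ (p k) (T (p k)) : ℂ) with hip
      have hnec : ((‖p k‖ : ℝ) : ℂ) ≠ 0 := by
        exact_mod_cast hpnorm k
      have hco : ((‖p k‖⁻¹ : ℝ) : ℂ) = (((‖p k‖ : ℝ) : ℂ))⁻¹ := by push_cast; ring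
      rw [hco] at h6
      have h8 : ip = ((ρ (k+1) : ℝ) : ℂ) * ((‖p k‖ : ℝ) : ℂ)^2 := by
        field_simp at h6
        linear_combination -h6
      have hpp : (inner ℂ (p k) (p k) : ℂ) = ((‖p k‖ : ℝ) : ℂ)^2 := by
        exact_mod_cast inner_self_eq_norm_sq_to_K (𝕜 := ℂ) (p k)
      rw [hMapp, inner_sub_right, inner_smul_right, hpp, ← hip, h8]
      ring
    -- Pythagoras
    have hpyth : ‖M (k+1) (p k)‖^2 ≤ κ k := by
      have hdecomp : M k (p k) = M (k+1) (p k) + (((ρ (k+1) - ρ k : ℝ)) : ℂ) • p k := by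
        rw [hMapp, hMapp]
        push_cast
        module
      have h9 : κ k = ‖M (k+1) (p k)‖^2 +
          2 * RCLike.re ⟪M (k+1) (p k), (((ρ (k+1) - ρ k : ℝ)) : ℂ) • p k⟫ +
          ‖(((ρ (k+1) - ρ k : ℝ)) : ℂ) • p k‖^2 := by
        rw [hκdef]
        show ‖M k (p k)‖^2 = _
        rw [hdecomp, norm_add_sq (𝕜 := ℂ)]
      have h10 : ⟪M (k+1) (p k), (((ρ (k+1) - ρ k : ℝ)) : ℂ) • p k⟫ = 0 := by
        rw [inner_smul_right, ← inner_conj_symm, hinner0]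
        simp
      rw [h10] at h9
      simp only [map_zero, mul_zero, add_zero] at h9
      nlinarith [sq_nonneg ‖(((ρ (k+1) - ρ k : ℝ)) : ℂ) • p k‖]
    have h11 : a (k+1) = ‖p k‖⁻¹^2 * ‖(M (k+1)) (p k)‖^2 := by
      have hnc : ‖((‖p k‖⁻¹ : ℝ) : ℂ)‖ = ‖p k‖⁻¹ := by
        rw [Complex.norm_real]
        exact abs_of_nonneg (inv_nonneg.mpr (norm_nonneg _))
      show ‖(M (k+1)) (u (k+1))‖^2 = _
      rw [hu1, hsmul, map_smul, norm_smul, mul_pow, hnc]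
    rw [h11]
    have h12 : ‖p k‖⁻¹^2 * ‖p k‖^2 = 1 := by
      rw [inv_pow]
      exact inv_mul_cancel₀ (pow_ne_zero 2 (hpnorm k))
    calc ‖p k‖⁻¹^2 * ‖M (k+1) (p k)‖^2 * ‖p k‖^2
        = (‖p k‖⁻¹^2 * ‖p k‖^2) * ‖M (k+1) (p k)‖^2 := by ring
    _ = ‖M (k+1) (p k)‖^2 := by rw [h12, one_mul]
    _ ≤ κ k := hpyth
  have hak : ∀ k, a k = ‖(M k) (u k)‖^2 := fun k => rfl
  have hdk : ∀ k, d k = ‖v k‖^2 := fun k => rfl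
  have hκk : ∀ k, κ k = ‖(M k) (p k)‖^2 := fun k => rfl
  have hpk : ∀ k, p k = u k + v k := fun k => rfl
  have hgoal : (fun k => ‖mApp (A - (ρ k : ℂ) • 1) (u k)‖ ^ 2 * ‖v k‖ ^ 2)
      = fun k => a k * d k := by
    funext k
    rw [hmApp k (u k)]
  rw [hgoal]
  clear hgoal hmin hnext
  clear_value T M p a d g κ
  -- monotonicity
  have hmono : ∀ k, a (k+1) ≤ a k := by
    intro k
    have h1 := hstep k
    have h2 := hκa k
    have h3 := hp2 k
    have h4 := ha0 (k+1)
    have h5 := hd0 k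
    have h6 : 1 ≤ ‖p k‖^2 := by rw [h3]; linarith
    calc a (k+1) = a (k+1) * 1 := (mul_one _).symm
    _ ≤ a (k+1) * ‖p k‖^2 := mul_le_mul_of_nonneg_left h6 h4
    _ ≤ κ k := h1
    _ ≤ a k := h2
  -- spectral setup
  have hgk : ∀ k, g k = (M k) (p k) := fun k => by rw [hgdef]
  set b := hA.eigenvectorBasis with hbdef
  set ν := hA.eigenvalues with hνdef
  have hTb : ∀ i, T (b i) = ((ν i : ℝ) : ℂ) • b i := by
    intro i
    rw [hTdef]
    rw [Matrix.toEuclideanLin_apply]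
    rw [hbdef, hνdef]
    rw [hA.mulVec_eigenvectorBasis i]
    rw [WithLp.toLp_smul]
    rw [WithLp.toLp_ofLp]
    exact RCLike.real_smul_eq_coe_smul (K := ℂ) _ _
  have hcoordT : ∀ (x : EuclideanSpace ℂ (Fin n)) i,
      (inner ℂ (b i) (T x) : ℂ) = ((ν i : ℝ) : ℂ) * (inner ℂ (b i) x : ℂ) := by
    intro x i
    rw [← hsym (b i) x, hTb i, inner_smul_left, Complex.conj_ofReal]
  have hcoordM : ∀ (k : ℕ) (x : EuclideanSpace ℂ (Fin n)) i,
      (inner ℂ (b i) ((M k) x) : ℂ) = ((ν i - ρ k : ℝ) : ℂ) * (inner ℂ (b i) x : ℂ) := by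
    intro k x i
    rw [hMapp, inner_sub_right, inner_smul_right, hcoordT]
    push_cast
    ring
  have hinnerSum : ∀ x y : EuclideanSpace ℂ (Fin n),
      (inner ℂ x y : ℂ) = ∑ i, (starRingEnd ℂ) (inner ℂ (b i) x : ℂ) * (inner ℂ (b i) y : ℂ) := by
    intro x y
    rw [← b.repr.inner_map_map x y, PiLp.inner_apply]
    refine Finset.sum_congr rfl fun i _ => ?_
    rw [RCLike.inner_apply, OrthonormalBasis.repr_apply_apply, OrthonormalBasis.repr_apply_apply]
    exact mul_comm _ _
  have hnormSum : ∀ x : EuclideanSpace ℂ (Fin n),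
      ‖x‖^2 = ∑ i, Complex.normSq (inner ℂ (b i) x : ℂ) := by
    intro x
    have h9 := hinnerSum x x
    rw [inner_self_eq_norm_sq_to_K] at h9
    have h10 : ((∑ i, Complex.normSq (inner ℂ (b i) x : ℂ) : ℝ) : ℂ) = ((‖x‖^2 : ℝ) : ℂ) := by
      push_cast [Complex.normSq_eq_conj_mul_self]
      rw [← h9]
      norm_cast
    exact_mod_cast h10.symm
  -- the minimal gap γ
  set Γ : Finset ℝ := insert 1 (((Finset.univ : Finset (Fin n × Fin n)).filter
      (fun ij => ν ij.1 ≠ ν ij.2)).image (fun ij => |ν ij.1 - ν ij.2|)) with hΓdef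
  have hΓne : Γ.Nonempty := ⟨1, Finset.mem_insert_self _ _⟩
  set γ : ℝ := Γ.min' hΓne with hγdef
  have hγpos : 0 < γ := by
    rw [hγdef, Finset.lt_min'_iff]
    intro z hz
    rw [hΓdef, Finset.mem_insert] at hz
    rcases hz with rfl | hz
    · norm_num
    · obtain ⟨ij, hij, rfl⟩ := Finset.mem_image.mp hz
      exact abs_pos.mpr (sub_ne_zero.mpr (Finset.mem_filter.mp hij).2)
  have hγle : ∀ i j, ν i ≠ ν j → γ ≤ |ν i - ν j| := by
    intro i j hij
    apply Finset.min'_le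
    rw [hΓdef]
    exact Finset.mem_insert_of_mem
      (Finset.mem_image.mpr ⟨(i, j), Finset.mem_filter.mpr ⟨Finset.mem_univ _, hij⟩, rfl⟩)
  -- the key estimate
  have hKEY : ∀ k, 0 < a (k+1) → a k ≤ γ^2/8 → d k ≤ 12/γ^2 * a k := by
    intro k hak1 hakd
    have hκpos : 0 < κ k := by
      have h1 := hstep k
      have h2 := hp2pos k
      nlinarith
    apply aux_key (fun i => ν i - ρ k) (fun i => Complex.normSq (inner ℂ (b i) (u k) : ℂ))
      (fun i => (inner ℂ (b i) (u k) : ℂ)) (fun i => (inner ℂ (b i) (p k) : ℂ))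
      (κ k) (a k) (d k) γ
    · intro i; rfl
    · -- F1
      have h1 := hnormSum (u k)
      rw [hu k] at h1
      simpa using h1.symm
    · -- F2
      rw [hak k, hnormSum ((M k) (u k))]
      refine Finset.sum_congr rfl fun i _ => ?_
      rw [hcoordM k (u k) i, Complex.normSq_mul, Complex.normSq_ofReal]
      ring
    · -- F3
      intro i
      have h1 : (M k) ((M k) (p k)) = ((κ k : ℝ) : ℂ) • u k := by
        rw [← hgk k]
        exact hBp k
      have h2 := congrArg (fun z => (inner ℂ (b i) z : ℂ)) h1
      rw [hcoordM k ((M k) (p k)) i, hcoordM k (p k) i, inner_smul_right] at h2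
      exact h2
    · -- F4
      have h1 := hinnerSum (u k) (p k)
      rw [hup k] at h1
      exact h1.symm
    · -- F5
      have h1 := hnormSum (p k)
      rw [hp2 k] at h1
      exact h1.symm
    · exact hκpos
    · exact hκa k
    · exact hγpos
    · -- gap
      intro i j hij
      have hne : ν i ≠ ν j := by
        intro hc
        apply hij
        simp [hc]
      have h1 := hγle i j hne
      have h2 : ν i - ρ k - (ν j - ρ k) = ν i - ν j := by ring
      rw [h2]
      exact h1
    · exact hakd
  -- limit of the monotone sequence a
  have haA : Antitone a := antitone_nat_of_succ_le hmono
  have hbdd : BddBelow (Set.range a) := ⟨0, by rintro z ⟨k, rfl⟩; exact ha0 k⟩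
  set L : ℝ := ⨅ k, a k with hLdef
  have hLtend : Filter.Tendsto a Filter.atTop (nhds L) := tendsto_atTop_ciInf haA hbdd
  have hLle : ∀ k, L ≤ a k := fun k => ciInf_le hbdd k
  have hL0 : 0 ≤ L := le_ciInf ha0
  rcases eq_or_lt_of_le hL0 with hL | hL
  · -- case L = 0
    rw [Metric.tendsto_atTop]
    intro ε hε
    have hCpos : (0:ℝ) < 12/γ^2 := by positivity
    set η : ℝ := min (γ^2/8) (min 1 (ε/(12/γ^2 + 1))) with hηdef
    have hηpos : 0 < η := by
      apply lt_min (by positivity)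
      apply lt_min one_pos
      positivity
    obtain ⟨K₀, hK₀⟩ : ∃ N, ∀ k ≥ N, a k < η := by
      have h1 := Metric.tendsto_atTop.mp hLtend η hηpos
      obtain ⟨N, hN⟩ := h1
      refine ⟨N, fun k hk => ?_⟩
      have h2 := hN k hk
      rw [Real.dist_eq, ← hL] at h2
      have h3 := ha0 k
      rw [abs_of_nonneg (by linarith)] at h2
      linarith
    by_cases hex0 : ∃ k₁, K₀ ≤ k₁ ∧ a k₁ = 0
    · obtain ⟨k₁, hk₁, h0⟩ := hex0
      refine ⟨k₁, fun k hk => ?_⟩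
      have h1 : a k = 0 := le_antisymm (h0 ▸ haA hk) (ha0 k)
      rw [Real.dist_eq, h1, zero_mul, sub_zero, abs_zero]
      exact hε
    · push_neg at hex0
      refine ⟨K₀, fun k hk => ?_⟩
      have h1 : 0 < a (k+1) :=
        lt_of_le_of_ne (ha0 (k+1)) (Ne.symm (hex0 (k+1) (le_trans hk (Nat.le_succ k))))
      have h2 : a k < η := hK₀ k hk
      have h3 := hKEY k h1 (le_trans h2.le (min_le_left _ _))
      have h4 : a k ≤ 1 := le_trans h2.le (le_trans (min_le_right _ _) (min_le_left _ _))
      have h5 : a k ≤ ε/(12/γ^2 + 1) :=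
        le_trans h2.le (le_trans (min_le_right _ _) (min_le_right _ _))
      rw [Real.dist_eq, sub_zero, abs_of_nonneg (mul_nonneg (ha0 k) (hd0 k))]
      have h6 : a k * d k ≤ 12/γ^2 * (a k * a k) := by nlinarith [ha0 k]
      have h7 : 12/γ^2 * (a k * a k) ≤ 12/γ^2 * (ε/(12/γ^2 + 1)) := by
        apply mul_le_mul_of_nonneg_left _ hCpos.le
        nlinarith [ha0 k]
      have h8 : 12/γ^2 * (ε/(12/γ^2 + 1)) < ε := by
        have e1 : 12/γ^2 * (ε/(12/γ^2 + 1)) = ε * ((12/γ^2)/(12/γ^2 + 1)) := by ring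
        have e2 : (12/γ^2)/(12/γ^2 + 1) < 1 := by
          rw [div_lt_one (by positivity)]
          linarith
        rw [e1]
        calc ε * ((12/γ^2)/(12/γ^2 + 1)) < ε * 1 := by
              exact mul_lt_mul_of_pos_left e2 hε
        _ = ε := mul_one _
      linarith
  · -- case L > 0
    apply squeeze_zero (fun k => mul_nonneg (ha0 k) (hd0 k))
      (g := fun k => (a 0 / L) * (a k - a (k+1)))
    · intro k
      have h1 := hstep k
      have h2 := hκa k
      have h3 := hp2 k
      have h4 : L ≤ a (k+1) := hLle (k+1)
      have h5 : a k ≤ a 0 := haA (Nat.zero_le k)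
      have h6 : a (k+1) * (1 + d k) ≤ a k := by
        rw [← h3]
        exact le_trans h1 h2
      have h7 : L * d k ≤ a k - a (k+1) := by nlinarith [hd0 k]
      have h8 : d k ≤ (a k - a (k+1))/L := by
        rw [le_div_iff₀ hL]
        linarith [mul_comm (d k) L]
      calc a k * d k ≤ a 0 * d k := mul_le_mul_of_nonneg_right h5 (hd0 k)
      _ ≤ a 0 * ((a k - a (k+1))/L) := by
          exact mul_le_mul_of_nonneg_left h8 (ha0 0)
      _ = (a 0 / L) * (a k - a (k+1)) := by ring
    · have h1 : Filter.Tendsto (fun k => a (k+1)) Filter.atTop (nhds L) := by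
        exact hLtend.comp (Filter.tendsto_add_atTop_nat 1)
      have h2 : Filter.Tendsto (fun k => a k - a (k+1)) Filter.atTop (nhds 0) := by
        have := hLtend.sub h1
        simpa using this
      have h3 := h2.const_mul (a 0 / L)
      simpa using h3
end

section
/- Let A be an n×n real symmetric matrix, x a unit eigenvector with Ax = λx, v a unit vector with ⟨v, x⟩ = 0, and Φ ∈ (0, π/2). Set u = cos(Φ)·x + sin(Φ)·v and ρ = ⟨u, Au⟩, and assume ρ is not an eigenvalue of A (so A−ρI is invertible). Let u' = (A−ρI)^{-2}u / ‖(A−ρI)^{-2}u‖ and let Φ' be the angle between u' and x. Then Φ' ∈ [0, π/2) and tan(Φ') = (λ−ρ)²·‖(A−ρI)^{-2}v‖·tan(Φ). -/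
open scoped RealInnerProductSpace Matrix

/-- The action of a real matrix on a vector of `EuclideanSpace ℝ (Fin n)`. -/
noncomputable def mAppR {n : ℕ} (A : Matrix (Fin n) (Fin n) ℝ)
    (v : EuclideanSpace ℝ (Fin n)) : EuclideanSpace ℝ (Fin n) :=
  Matrix.toEuclideanLin A v

/-- `μ` is an eigenvalue of the real matrix `A`. -/
def IsEigenvalueR {n : ℕ} (A : Matrix (Fin n) (Fin n) ℝ) (μ : ℝ) : Prop :=
  ∃ x : EuclideanSpace ℝ (Fin n), x ≠ 0 ∧ mAppR A x = μ • x

/-- The angle between two vectors, `arccos (⟪a, b⟫ / (‖a‖ * ‖b‖)) ∈ [0, π]`. -/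
noncomputable def angleR {n : ℕ} (a b : EuclideanSpace ℝ (Fin n)) : ℝ :=
  Real.arccos (⟪a, b⟫ / (‖a‖ * ‖b‖))

lemma mAppR_mul {n : ℕ} (P Q : Matrix (Fin n) (Fin n) ℝ) (y : EuclideanSpace ℝ (Fin n)) :
    mAppR (P * Q) y = mAppR P (mAppR Q y) := by
  simp [mAppR, Matrix.toEuclideanLin_apply, Matrix.mulVec_mulVec]

lemma mAppR_one {n : ℕ} (y : EuclideanSpace ℝ (Fin n)) : mAppR 1 y = y := by
  simp [mAppR, Matrix.toEuclideanLin_apply]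

lemma mAppR_smul {n : ℕ} (P : Matrix (Fin n) (Fin n) ℝ) (c : ℝ) (y : EuclideanSpace ℝ (Fin n)) :
    mAppR P (c • y) = c • mAppR P y := by
  simp [mAppR]

lemma mAppR_add {n : ℕ} (P : Matrix (Fin n) (Fin n) ℝ) (y z : EuclideanSpace ℝ (Fin n)) :
    mAppR P (y + z) = mAppR P y + mAppR P z := by
  simp [mAppR]

lemma mAppR_matsub {n : ℕ} (P Q : Matrix (Fin n) (Fin n) ℝ) (y : EuclideanSpace ℝ (Fin n)) :
    mAppR (P - Q) y = mAppR P y - mAppR Q y := by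
  simp [mAppR, map_sub]

lemma mAppR_matsmul {n : ℕ} (P : Matrix (Fin n) (Fin n) ℝ) (c : ℝ) (y : EuclideanSpace ℝ (Fin n)) :
    mAppR (c • P) y = c • mAppR P y := by
  simp [mAppR, map_smul]

set_option maxHeartbeats 1000000 in
theorem stmt14 {n : ℕ} (A : Matrix (Fin n) (Fin n) ℝ) (hA : A.IsSymm)
    (x : EuclideanSpace ℝ (Fin n)) (lam : ℝ) (hx : ‖x‖ = 1)
    (hxeig : mAppR A x = lam • x)
    (v : EuclideanSpace ℝ (Fin n)) (hv : ‖v‖ = 1) (hvx : ⟪v, x⟫ = 0)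
    (Φ : ℝ) (hΦ : Φ ∈ Set.Ioo 0 (Real.pi / 2))
    (u : EuclideanSpace ℝ (Fin n)) (hu : u = Real.cos Φ • x + Real.sin Φ • v)
    (ρ : ℝ) (hρ : ρ = ⟪u, mAppR A u⟫) (hρeig : ¬ IsEigenvalueR A ρ)
    (u' : EuclideanSpace ℝ (Fin n))
    (hu' : u' = ‖mAppR ((A - ρ • 1)⁻¹ ^ 2) u‖⁻¹ • mAppR ((A - ρ • 1)⁻¹ ^ 2) u)
    (Φ' : ℝ) (hΦ' : Φ' = angleR u' x) :
    Φ' ∈ Set.Ico 0 (Real.pi / 2) ∧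
      Real.tan Φ' = (lam - ρ) ^ 2 * ‖mAppR ((A - ρ • 1)⁻¹ ^ 2) v‖ * Real.tan Φ := by
  set M : Matrix (Fin n) (Fin n) ℝ := A - ρ • 1 with hM
  set B : Matrix (Fin n) (Fin n) ℝ := M⁻¹ ^ 2 with hB
  have hx0 : x ≠ 0 := fun h => by simp [h] at hx
  -- M is invertible
  have hMdet : IsUnit M.det := by
    by_contra h
    have hdet0 : M.det = 0 := by simpa [isUnit_iff_ne_zero] using h
    obtain ⟨y, hy0, hy⟩ := (Matrix.exists_mulVec_eq_zero_iff).mpr hdet0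
    apply hρeig
    refine ⟨(WithLp.equiv 2 _).symm y, ?_, ?_⟩
    · simpa using hy0
    · have : A *ᵥ y = ρ • y := by
        have := hy
        rw [hM, Matrix.sub_mulVec, Matrix.smul_mulVec, Matrix.one_mulVec,
          sub_eq_zero] at this
        exact this
      simp [mAppR, Matrix.toEuclideanLin_apply, this]
  have hMinv : M⁻¹ * M = 1 := Matrix.nonsing_inv_mul M hMdet
  -- lam ≠ ρ
  have hlam : lam - ρ ≠ 0 := by
    intro h
    exact hρeig ⟨x, hx0, by rw [← sub_eq_zero.mp h]; exact hxeig⟩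
  -- M x = (lam - ρ) • x
  have hMx : mAppR M x = (lam - ρ) • x := by
    rw [hM, mAppR_matsub, mAppR_matsmul, mAppR_one, hxeig, sub_smul]
  have hinvx : mAppR M⁻¹ x = (lam - ρ)⁻¹ • x := by
    have h1 : mAppR M⁻¹ (mAppR M x) = x := by rw [← mAppR_mul, hMinv, mAppR_one]
    rw [hMx, mAppR_smul] at h1
    have := congrArg (fun z => (lam - ρ)⁻¹ • z) h1
    simpa [smul_smul, inv_mul_cancel₀ hlam] using this.symm |>.symm
  have hBx : mAppR B x = ((lam - ρ)⁻¹) ^ 2 • x := by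
    rw [hB, sq, mAppR_mul, hinvx, mAppR_smul, hinvx, smul_smul, sq]
  -- B is symmetric as an operator
  have hBsym : ∀ a b : EuclideanSpace ℝ (Fin n), ⟪mAppR B a, b⟫ = ⟪a, mAppR B b⟫ := by
    have hMs : M.IsSymm := by
      rw [hM, Matrix.IsSymm, Matrix.transpose_sub, hA.eq, Matrix.transpose_smul,
        Matrix.transpose_one]
    have hBs : B.IsSymm := by
      rw [hB, Matrix.IsSymm, Matrix.transpose_pow, Matrix.transpose_nonsing_inv, hMs.eq]
    have hBH : B.IsHermitian := by
      rw [Matrix.IsHermitian, Matrix.conjTranspose_eq_transpose_of_trivial]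
      exact hBs
    intro a b
    exact (Matrix.isHermitian_iff_isSymmetric.mp hBH) a b
  have hBvx : ⟪x, mAppR B v⟫ = 0 := by
    rw [← hBsym, hBx, real_inner_smul_left, real_inner_comm, hvx, mul_zero]
  -- decomposition of B u
  set c : ℝ := Real.cos Φ * ((lam - ρ)⁻¹) ^ 2 with hc
  set w : EuclideanSpace ℝ (Fin n) := Real.sin Φ • mAppR B v with hw
  set g : EuclideanSpace ℝ (Fin n) := mAppR B u with hg
  have hgdecomp : g = c • x + w := by
    rw [hg, hu, mAppR_add, mAppR_smul, mAppR_smul, hBx, hw, smul_smul, hc]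
  have hcosΦ : 0 < Real.cos Φ := Real.cos_pos_of_mem_Ioo
    ⟨by linarith [hΦ.1, Real.pi_pos], hΦ.2⟩
  have hsinΦ : 0 < Real.sin Φ := Real.sin_pos_of_pos_of_lt_pi hΦ.1
    (by linarith [hΦ.2, Real.pi_pos])
  have hcpos : 0 < c := by
    apply mul_pos hcosΦ
    positivity
  have hxx : ⟪x, x⟫ = 1 := by
    rw [real_inner_self_eq_norm_sq, hx]; norm_num
  have hwx : ⟪w, x⟫ = 0 := by
    rw [hw, real_inner_smul_left, real_inner_comm, hBvx, mul_zero]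
  have hgx : ⟪g, x⟫ = c := by
    rw [hgdecomp, inner_add_left, real_inner_smul_left, hxx, hwx]; ring
  have hgnormsq : ‖g‖ ^ 2 = c ^ 2 + ‖w‖ ^ 2 := by
    have hcxw : (⟪c • x, w⟫ : ℝ) = 0 := by
      rw [real_inner_smul_left, show (⟪x, w⟫ : ℝ) = ⟪w, x⟫ from real_inner_comm w x,
        hwx, mul_zero]
    rw [hgdecomp, norm_add_sq_real, hcxw, norm_smul]
    simp [hx, abs_of_pos hcpos]
  have hg0 : g ≠ 0 := by
    intro h
    rw [h, inner_zero_left] at hgx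
    exact absurd hgx.symm (ne_of_gt hcpos)
  have hgn : 0 < ‖g‖ := norm_pos_iff.mpr hg0
  have hcle : c ≤ ‖g‖ := by nlinarith [norm_nonneg w]
  set t : ℝ := c / ‖g‖ with ht
  have ht0 : 0 < t := div_pos hcpos hgn
  have ht1 : t ≤ 1 := (div_le_one hgn).mpr hcle
  -- u' and the angle
  have hu'n : ‖u'‖ = 1 := by
    rw [hu', norm_smul, norm_inv, norm_norm, inv_mul_cancel₀ (ne_of_gt hgn)]
  have hu'x : (⟪u', x⟫ : ℝ) = t := by
    rw [hu', real_inner_smul_left, hgx, ht]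
    ring
  have hΦ't : Φ' = Real.arccos t := by
    rw [hΦ', angleR, hu'x, hu'n, hx]
    norm_num
  have hcosΦ' : Real.cos Φ' = t := by
    rw [hΦ't, Real.cos_arccos (by linarith) ht1]
  have hsinΦ' : Real.sin Φ' = ‖w‖ / ‖g‖ := by
    rw [hΦ't, Real.sin_arccos]
    have h1t : 1 - t ^ 2 = (‖w‖ / ‖g‖) ^ 2 := by
      rw [ht, div_pow, div_pow]
      field_simp
      nlinarith
    rw [h1t, Real.sqrt_sq (by positivity)]
  constructor
  · constructor
    · rw [hΦ't]; exact Real.arccos_nonneg t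
    · rw [hΦ't]; exact Real.arccos_lt_pi_div_two.mpr ht0
  · have hwn : ‖w‖ = Real.sin Φ * ‖mAppR B v‖ := by
      rw [hw, norm_smul, Real.norm_eq_abs, abs_of_pos hsinΦ]
    rw [Real.tan_eq_sin_div_cos, hsinΦ', hcosΦ', Real.tan_eq_sin_div_cos, ht, hwn, hc]
    field_simp
end

section
/- Let A be an n×n real symmetric matrix and let x be a unit eigenvector with Ax = λx, where λ is a simple eigenvalue of A (its eigenspace is one-dimensional). Let (u_k) be a sequence of unit vectors in ℝⁿ such that, with ρ_k = ⟨u_k, A u_k⟩, the matrix A−ρ_k I is invertible for every k and u_{k+1} = (A−ρ_k I)^{-2} u_k / ‖(A−ρ_k I)^{-2} u_k‖, and suppose u_k → x as k → ∞. Let Φ_k denote the angle between u_k and x. Then the convergence is of order five: there exist a constant C > 0 and an index N such that Φ_{k+1} ≤ C·Φ_k⁵ for all k ≥ N. -/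
open scoped RealInnerProductSpace Matrix

set_option maxHeartbeats 1000000 in
theorem stmt16 {n : ℕ} (A : Matrix (Fin n) (Fin n) ℝ) (hA : A.IsSymm)
    (x : EuclideanSpace ℝ (Fin n)) (lam : ℝ) (hx : ‖x‖ = 1)
    (hxeig : mAppR A x = lam • x)
    (hsimple : ∀ y : EuclideanSpace ℝ (Fin n), mAppR A y = lam • y →
      ∃ c : ℝ, y = c • x)
    (u : ℕ → EuclideanSpace ℝ (Fin n)) (hu : ∀ k, ‖u k‖ = 1)
    (ρ : ℕ → ℝ) (hρ : ∀ k, ρ k = ⟪u k, mAppR A (u k)⟫)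
    (hinv : ∀ k, IsUnit (A - ρ k • 1))
    (hnext : ∀ k, u (k + 1) =
      ‖mAppR ((A - ρ k • 1)⁻¹ ^ 2) (u k)‖⁻¹ • mAppR ((A - ρ k • 1)⁻¹ ^ 2) (u k))
    (hconv : Filter.Tendsto u Filter.atTop (nhds x))
    (Φ : ℕ → ℝ) (hΦ : ∀ k, Φ k = angleR (u k) x) :
    ∃ C > (0 : ℝ), ∃ N : ℕ, ∀ k ≥ N, Φ (k + 1) ≤ C * Φ k ^ 5 := by
  classical
  set T : EuclideanSpace ℝ (Fin n) →ₗ[ℝ] EuclideanSpace ℝ (Fin n) :=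
    Matrix.toEuclideanLin A with hTdef
  have hH : A.IsHermitian := by
    rwa [Matrix.IsHermitian, Matrix.conjTranspose_eq_transpose_of_trivial]
  have hsymT : ∀ y z : EuclideanSpace ℝ (Fin n), ⟪T y, z⟫ = ⟪y, T z⟫ :=
    fun y z => (Matrix.isHermitian_iff_isSymmetric.mp hH) y z
  have hTx : T x = lam • x := hxeig
  have hxx : ⟪x, x⟫ = 1 := by
    rw [real_inner_self_eq_norm_sq, hx]; norm_num
  -- multiplicativity of toEuclideanLin
  have hmulL : ∀ (M N : Matrix (Fin n) (Fin n) ℝ) v,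
      Matrix.toEuclideanLin (M * N) v
        = Matrix.toEuclideanLin M (Matrix.toEuclideanLin N v) := by
    intro M N v
    simp [Matrix.toEuclideanLin_apply, Matrix.mulVec_mulVec]
  -- L k = action of A - ρ k • 1
  set B : ℕ → Matrix (Fin n) (Fin n) ℝ := fun k => A - ρ k • 1 with hBdef
  have hLapp : ∀ k v, Matrix.toEuclideanLin (B k) v = T v - ρ k • v := by
    intro k v
    have : Matrix.toEuclideanLin (B k) v
        = Matrix.toEuclideanLin A v - ρ k • Matrix.toEuclideanLin (1 : Matrix (Fin n) (Fin n) ℝ) v := by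
      rw [hBdef]
      simp [map_sub, LinearMap.sub_apply]
    rw [this]
    congr 1
    simp [Matrix.toEuclideanLin_apply]
  -- key identity : (L k)^2 (w k) = u k  where w k is the unnormalized iterate
  have hBB : ∀ k, (B k) * ((B k) * ((B k)⁻¹ ^ 2)) = 1 := by
    intro k
    have hdet := (Matrix.isUnit_iff_isUnit_det _).mp (hinv k)
    rw [sq, ← mul_assoc (B k) (B k)⁻¹, Matrix.mul_nonsing_inv _ hdet, one_mul,
      Matrix.mul_nonsing_inv _ hdet]
  have hLLw : ∀ k, Matrix.toEuclideanLin (B k)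
      (Matrix.toEuclideanLin (B k) (mAppR ((B k)⁻¹ ^ 2) (u k))) = u k := by
    intro k
    have h1 : mAppR ((B k)⁻¹ ^ 2) (u k) = Matrix.toEuclideanLin ((B k)⁻¹ ^ 2) (u k) := rfl
    rw [h1, ← hmulL, ← hmulL, mul_assoc, hBB]
    simp [Matrix.toEuclideanLin_apply]
  -- ρ k ≠ lam
  have hxne : x ≠ 0 := by
    intro h; rw [h, norm_zero] at hx; norm_num at hx
  have hρne : ∀ k, ρ k ≠ lam := by
    intro k h
    have hdet := (Matrix.isUnit_iff_isUnit_det _).mp (hinv k)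
    have h0 : Matrix.toEuclideanLin (B k) x = 0 := by
      rw [hLapp, hTx, h]; simp
    have : x = 0 := by
      have := congrArg (Matrix.toEuclideanLin (B k)⁻¹) h0
      rw [← hmulL, Matrix.nonsing_inv_mul _ hdet] at this
      simpa [Matrix.toEuclideanLin_apply] using this
    exact hxne this
  -- spectral gap on the orthogonal complement of x
  obtain ⟨δ, hδpos, hgap⟩ :
      ∃ δ > (0:ℝ), ∀ v : EuclideanSpace ℝ (Fin n), ⟪x, v⟫ = 0 →
        δ * ‖v‖ ≤ ‖T v - lam • v‖ := by
    set Kx := (ℝ ∙ x)ᗮ with hKxdef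
    set f : Kx →ₗ[ℝ] EuclideanSpace ℝ (Fin n) :=
      (T - lam • LinearMap.id).comp Kx.subtype with hfdef
    have hfapp : ∀ m : Kx, f m = T (m : EuclideanSpace ℝ (Fin n)) - lam • (m : EuclideanSpace ℝ (Fin n)) := by
      intro m
      simp [hfdef, LinearMap.sub_apply]
    have hker : LinearMap.ker f = ⊥ := by
      rw [LinearMap.ker_eq_bot']
      intro m hm
      have hm' : T (m : EuclideanSpace ℝ (Fin n)) = lam • (m : EuclideanSpace ℝ (Fin n)) := by
        have h0 := hfapp m
        rw [hm] at h0
        exact (sub_eq_zero.mp h0.symm)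
      obtain ⟨c, hc⟩ := hsimple m hm'
      have hxm : ⟪x, (m : EuclideanSpace ℝ (Fin n))⟫ = 0 :=
        (Submodule.mem_orthogonal_singleton_iff_inner_right).mp m.2
      rw [hc, real_inner_smul_right, hxx] at hxm
      have hc0 : c = 0 := by linarith [hxm]
      have : (m : EuclideanSpace ℝ (Fin n)) = 0 := by rw [hc, hc0, zero_smul]
      exact Subtype.ext this
    obtain ⟨K, hK, hanti⟩ := f.exists_antilipschitzWith hker
    have hKR : (0:ℝ) < (K:ℝ) := by exact_mod_cast hK
    refine ⟨(K:ℝ)⁻¹, inv_pos.mpr hKR, ?_⟩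
    intro v hv
    have hvmem : v ∈ Kx := (Submodule.mem_orthogonal_singleton_iff_inner_right).mpr hv
    set m : Kx := ⟨v, hvmem⟩ with hmdef
    have h1 := hanti.le_mul_dist m 0
    rw [map_zero] at h1
    rw [dist_zero_right, dist_zero_right] at h1
    have hnm : ‖m‖ = ‖v‖ := rfl
    rw [hnm, hfapp m] at h1
    have h2 : (K:ℝ)⁻¹ * ‖v‖ ≤ (K:ℝ)⁻¹ * ((K:ℝ) * ‖T v - lam • v‖) :=
      mul_le_mul_of_nonneg_left h1 (by positivity)
    calc (K:ℝ)⁻¹ * ‖v‖ ≤ (K:ℝ)⁻¹ * ((K:ℝ) * ‖T v - lam • v‖) := h2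
    _ = ‖T v - lam • v‖ := by field_simp
  -- operator norm bound
  obtain ⟨M₀, hM₀, hMbound⟩ :
      ∃ M₀ ≥ (0:ℝ), ∀ v : EuclideanSpace ℝ (Fin n), ‖T v - lam • v‖ ≤ M₀ * ‖v‖ := by
    set g := LinearMap.toContinuousLinearMap (T - lam • LinearMap.id) with hgdef
    refine ⟨‖g‖, norm_nonneg _, fun v => ?_⟩
    have h1 : g v = T v - lam • v := by simp [hgdef]
    have := g.le_opNorm v
    rwa [h1] at this
  -- convergence facts
  have hc1 : Filter.Tendsto (fun k => ⟪x, u k⟫) Filter.atTop (nhds 1) := by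
    have h : Filter.Tendsto (fun k => ⟪x, u k⟫) Filter.atTop (nhds ⟪x, x⟫) :=
      Filter.Tendsto.inner tendsto_const_nhds hconv
    rwa [hxx] at h
  have hρconv : Filter.Tendsto ρ Filter.atTop (nhds lam) := by
    have hTcont : Continuous T := T.continuous_of_finiteDimensional
    have h2 : Filter.Tendsto (fun k => ⟪u k, T (u k)⟫) Filter.atTop (nhds ⟪x, T x⟫) :=
      Filter.Tendsto.inner hconv ((hTcont.tendsto x).comp hconv)
    have hxTx : ⟪x, T x⟫ = lam := by
      rw [hTx, real_inner_smul_right, hxx]; ring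
    rw [hxTx] at h2
    exact h2.congr (fun k => ((hρ k).symm : ⟪u k, T (u k)⟫ = ρ k))
  have hev1 : ∀ᶠ k in Filter.atTop, (1:ℝ)/2 ≤ ⟪x, u k⟫ :=
    hc1.eventually_const_le (by norm_num)
  have hev2 : ∀ᶠ k in Filter.atTop, |ρ k - lam| ≤ δ/2 := by
    have : Metric.closedBall lam (δ/2) ∈ nhds lam :=
      Metric.closedBall_mem_nhds lam (by positivity)
    filter_upwards [hρconv.eventually this] with k hk
    simpa [Real.dist_eq] using hk
  obtain ⟨N, hN⟩ := Filter.eventually_atTop.mp (hev1.and hev2)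
  refine ⟨Real.pi/2 * (8/δ^2) * (M₀^2 + 1), by positivity, N, ?_⟩
  intro k hk
  obtain ⟨hck, hρk⟩ := hN k hk
  set c := ⟪x, u k⟫ with hcdef
  have hc0 : (0:ℝ) < c := lt_of_lt_of_le (by norm_num) hck
  set v := u k - c • x with hvdef
  have hvx : ⟪x, v⟫ = 0 := by
    rw [hvdef, inner_sub_right, real_inner_smul_right, hxx, ← hcdef]; ring
  have hvx' : ⟪v, x⟫ = 0 := by rw [real_inner_comm]; exact hvx
  have huu : ⟪u k, u k⟫ = 1 := by
    rw [real_inner_self_eq_norm_sq, hu]; norm_num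
  have hux : ⟪u k, x⟫ = c := by rw [real_inner_comm, ← hcdef]
  have hnv : ‖v‖^2 = 1 - c^2 := by
    rw [← real_inner_self_eq_norm_sq, hvdef]
    simp only [inner_sub_left, inner_sub_right, real_inner_smul_left,
      real_inner_smul_right, hxx, huu, hux, ← hcdef]
    ring
  have hΦk : Φ k = Real.arccos c := by
    rw [hΦ k]
    unfold angleR
    rw [hu k, hx, real_inner_comm, ← hcdef]
    norm_num
  have hvnorm : ‖v‖ = Real.sin (Φ k) := by
    rw [hΦk, Real.sin_arccos, ← hnv, Real.sqrt_sq (norm_nonneg _)]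
  have hvΦ : ‖v‖ ≤ Φ k := by
    rw [hvnorm]
    exact Real.sin_le (by rw [hΦk]; exact Real.arccos_nonneg _)
  have hΦk0 : 0 ≤ Φ k := by rw [hΦk]; exact Real.arccos_nonneg _
  -- ρ k - lam = ⟪v, T v - lam • v⟫
  have hukvc : u k = c • x + v := by rw [hvdef]; abel
  have hxTv : ⟪x, T v⟫ = 0 := by
    rw [← hsymT, hTx, real_inner_smul_left, hvx]; ring
  have hvv : ⟪v, v⟫ = 1 - c^2 := by rw [real_inner_self_eq_norm_sq, hnv]
  have h3 : ρ k = ⟪u k, T (u k)⟫ := hρ k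
  have hid : ρ k - lam = ⟪v, T v - lam • v⟫ := by
    rw [h3, hukvc]
    rw [map_add, map_smul, hTx]
    simp only [inner_add_left, inner_add_right, inner_sub_right,
      real_inner_smul_left, real_inner_smul_right, hxx, hvx, hvx', hxTv, hvv]
    ring
  have hρbound : |ρ k - lam| ≤ M₀ * ‖v‖^2 := by
    rw [hid]
    calc |⟪v, T v - lam • v⟫| ≤ ‖v‖ * ‖T v - lam • v‖ := abs_real_inner_le_norm _ _
    _ ≤ ‖v‖ * (M₀ * ‖v‖) := mul_le_mul_of_nonneg_left (hMbound v) (norm_nonneg v)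
    _ = M₀ * ‖v‖^2 := by ring
  -- the unnormalized next iterate
  set w := mAppR ((B k)⁻¹ ^ 2) (u k) with hwdef
  have hw' : u (k+1) = ‖w‖⁻¹ • w := hnext k
  set a := ⟪x, w⟫ with hadef
  set v' := w - a • x with hv'def
  have hv'x : ⟪x, v'⟫ = 0 := by
    rw [hv'def, inner_sub_right, real_inner_smul_right, hxx, ← hadef]; ring
  have hv'x2 : ⟪v', x⟫ = 0 := by rw [real_inner_comm]; exact hv'x
  have hxL : ∀ z, ⟪x, Matrix.toEuclideanLin (B k) z⟫ = (lam - ρ k) * ⟪x, z⟫ := by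
    intro z
    rw [hLapp, inner_sub_right, ← hsymT, hTx, real_inner_smul_left,
      real_inner_smul_right]
    ring
  have hLLwk : Matrix.toEuclideanLin (B k)
      (Matrix.toEuclideanLin (B k) w) = u k := hLLw k
  have hca : c = (lam - ρ k)^2 * a := by
    have h4 := congrArg (fun z => (⟪x, z⟫ : ℝ)) hLLwk
    rw [hxL, hxL, ← hadef, ← hcdef] at h4
    rw [← h4]; ring
  have hρne' : lam - ρ k ≠ 0 := sub_ne_zero.mpr (Ne.symm (hρne k))
  have hsq : 0 < (lam - ρ k)^2 := by positivity
  have ha0 : 0 < a := by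
    by_contra h
    push_neg at h
    have h6 : c ≤ 0 := by
      rw [hca]
      exact mul_nonpos_of_nonneg_of_nonpos (le_of_lt hsq) h
    linarith
  have hLx : Matrix.toEuclideanLin (B k) x = (lam - ρ k) • x := by
    rw [hLapp, hTx, ← sub_smul]
  have hvrel : Matrix.toEuclideanLin (B k)
      (Matrix.toEuclideanLin (B k) v') = v := by
    have e1 : Matrix.toEuclideanLin (B k) v'
        = Matrix.toEuclideanLin (B k) w - (a * (lam - ρ k)) • x := by
      rw [hv'def, map_sub, map_smul, hLx, smul_smul]
    rw [e1, map_sub, map_smul, hLx, hLLwk, hvdef, smul_smul, hca]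
    have h5 : a * (lam - ρ k) * (lam - ρ k) = (lam - ρ k)^2 * a := by ring
    rw [h5]
  -- spectral gap bound with shift ρ k
  have hgap2 : ∀ z : EuclideanSpace ℝ (Fin n), ⟪x, z⟫ = 0 →
      δ/2 * ‖z‖ ≤ ‖Matrix.toEuclideanLin (B k) z‖ := by
    intro z hz
    have h1 := hgap z hz
    have h6 : ‖(ρ k - lam) • z‖ ≤ δ/2 * ‖z‖ := by
      rw [norm_smul, Real.norm_eq_abs]
      exact mul_le_mul_of_nonneg_right hρk (norm_nonneg z)
    have h4 := norm_sub_norm_le (T z - lam • z) ((ρ k - lam) • z)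
    have h5 : T z - lam • z - (ρ k - lam) • z = T z - ρ k • z := by
      rw [sub_smul]; abel
    rw [h5] at h4
    rw [hLapp]
    linarith
  have hLv'x : ⟪x, Matrix.toEuclideanLin (B k) v'⟫ = 0 := by
    rw [hxL, hv'x]; ring
  have hv'bound : (δ/2)^2 * ‖v'‖ ≤ ‖v‖ := by
    have h1 := hgap2 v' hv'x
    have h2 := hgap2 _ hLv'x
    rw [hvrel] at h2
    nlinarith [mul_le_mul_of_nonneg_left h1 (le_of_lt (half_pos hδpos))]
  have haw : a ≤ ‖w‖ := by
    calc a = ⟪x, w⟫ := hadef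
    _ ≤ ‖x‖ * ‖w‖ := real_inner_le_norm _ _
    _ = ‖w‖ := by rw [hx, one_mul]
  have hw0 : (0:ℝ) < ‖w‖ := lt_of_lt_of_le ha0 haw
  have hv'v' : ⟪v', v'⟫ = ‖v'‖^2 := real_inner_self_eq_norm_sq _
  have hwv : w = a • x + v' := by rw [hv'def]; abel
  have hwsq : ‖w‖^2 = a^2 + ‖v'‖^2 := by
    conv_lhs => rw [← real_inner_self_eq_norm_sq, hwv]
    simp only [inner_add_left, inner_add_right, real_inner_smul_left,
      real_inner_smul_right, hxx, hv'x, hv'x2, hv'v']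
    ring
  -- the angle at step k+1
  have hΦk1 : Φ (k+1) = Real.arccos (a / ‖w‖) := by
    rw [hΦ (k+1)]
    unfold angleR
    rw [hu (k+1), hx]
    have hinner : ⟪u (k+1), x⟫ = a / ‖w‖ := by
      rw [hw', real_inner_smul_left, real_inner_comm, ← hadef, inv_mul_eq_div]
    rw [hinner]
    norm_num
  have ht0 : 0 < a / ‖w‖ := div_pos ha0 hw0
  have hΦ1le : Φ (k+1) ≤ Real.pi/2 := by
    rw [hΦk1]; exact Real.arccos_le_pi_div_two.mpr (le_of_lt ht0)
  have hΦ1nonneg : 0 ≤ Φ (k+1) := by rw [hΦk1]; exact Real.arccos_nonneg _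
  have hsin1 : Real.sin (Φ (k+1)) = ‖v'‖ / ‖w‖ := by
    rw [hΦk1, Real.sin_arccos]
    have h7 : 1 - (a/‖w‖)^2 = (‖v'‖/‖w‖)^2 := by
      field_simp
      linarith [hwsq]
    rw [h7, Real.sqrt_sq (by positivity)]
  have hkey : Φ (k+1) ≤ Real.pi/2 * (‖v'‖ / a) := by
    have hms := Real.mul_le_sin hΦ1nonneg hΦ1le
    rw [hsin1] at hms
    have hfrac : ‖v'‖/‖w‖ ≤ ‖v'‖/a :=
      div_le_div_of_nonneg_left (norm_nonneg v') ha0 haw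
    have hπ : (0:ℝ) < Real.pi := Real.pi_pos
    have h6 : Φ (k+1) ≤ Real.pi/2 * (‖v'‖/‖w‖) := by
      have h8 := mul_le_mul_of_nonneg_left hms
        (le_of_lt (show (0:ℝ) < Real.pi/2 by positivity))
      calc Φ (k+1) = Real.pi/2 * (2/Real.pi * Φ (k+1)) := by
            field_simp
      _ ≤ Real.pi/2 * (‖v'‖/‖w‖) := h8
    calc Φ (k+1) ≤ Real.pi/2 * (‖v'‖/‖w‖) := h6
    _ ≤ Real.pi/2 * (‖v'‖/a) := by
        exact mul_le_mul_of_nonneg_left hfrac (by positivity)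
  -- assemble the final bound
  have hv'le : ‖v'‖ ≤ 4/δ^2 * ‖v‖ := by
    have h7 : (0:ℝ) < (δ/2)^2 := by positivity
    have h8 : 4/δ^2 * ((δ/2)^2 * ‖v'‖) = ‖v'‖ := by field_simp; ring
    have h9 := mul_le_mul_of_nonneg_left hv'bound
      (le_of_lt (show (0:ℝ) < 4/δ^2 by positivity))
    linarith
  have hainv : (1:ℝ)/a ≤ 2 * (lam - ρ k)^2 := by
    rw [div_le_iff₀ ha0]
    calc (1:ℝ) ≤ 2 * c := by linarith
    _ = 2 * ((lam - ρ k)^2 * a) := by rw [hca]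
    _ = 2 * (lam - ρ k)^2 * a := by ring
  have hs2 : (lam - ρ k)^2 ≤ (M₀ * ‖v‖^2)^2 := by
    have h10 : |lam - ρ k| ≤ M₀ * ‖v‖^2 := by rw [abs_sub_comm]; exact hρbound
    calc (lam - ρ k)^2 = |lam - ρ k|^2 := (sq_abs _).symm
    _ ≤ (M₀ * ‖v‖^2)^2 := pow_le_pow_left₀ (abs_nonneg _) h10 2
  have h11 : (1:ℝ)/a ≤ 2 * (M₀ * ‖v‖^2)^2 := by linarith
  have h12 : ‖v'‖ * (1/a) ≤ (4/δ^2 * ‖v‖) * (2*(M₀*‖v‖^2)^2) := by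
    apply mul_le_mul hv'le h11 (by positivity) (by positivity)
  have hfinal : Φ (k+1) ≤ Real.pi/2 * ((4/δ^2 * ‖v‖) * (2*(M₀*‖v‖^2)^2)) := by
    have h13 : ‖v'‖ / a = ‖v'‖ * (1/a) := by ring
    calc Φ (k+1) ≤ Real.pi/2 * (‖v'‖/a) := hkey
    _ = Real.pi/2 * (‖v'‖ * (1/a)) := by rw [h13]
    _ ≤ Real.pi/2 * ((4/δ^2 * ‖v‖) * (2*(M₀*‖v‖^2)^2)) :=
        mul_le_mul_of_nonneg_left h12 (by positivity)
  have hexp : Real.pi/2 * ((4/δ^2 * ‖v‖) * (2*(M₀*‖v‖^2)^2))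
      = Real.pi/2 * (8/δ^2) * M₀^2 * ‖v‖^5 := by ring
  have hpow : ‖v‖^5 ≤ Φ k ^5 := pow_le_pow_left₀ (norm_nonneg v) hvΦ 5
  calc Φ (k+1) ≤ Real.pi/2 * (8/δ^2) * M₀^2 * ‖v‖^5 := by rw [← hexp]; exact hfinal
  _ ≤ Real.pi/2 * (8/δ^2) * (M₀^2+1) * Φ k ^5 := by
      apply mul_le_mul ?_ hpow (by positivity) (by positivity)
      exact mul_le_mul_of_nonneg_left (by linarith) (by positivity)
end
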